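/- If every scheduling step in a trace is governed by anti-monotonic validity predicates, then for any valid trace from configuration C to C' over a set of workers, the projection of the trace onto a single worker w (keeping only allocations and deallocations at w, in order) is itself a valid trace from C restricted to w to C' restricted to w, provided each allocation's validity predicate at w depends only on the state of w. -/

import Mathlib

/-- Transition labels: allocate or deallocate a function at a worker. -/
inductive Lab (F W : Type*)
  | alloc : F → W → Lab F W
  | deal : F → W → Lab F W

/-- Worker of a label. -/
def Lab.worker {F W : Type*} : Lab F W → W
  | .alloc _ w => w
  | .deal _ w => w

/-- Valid trace of the multi-worker system: allocations at `w` require the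
per-function, per-worker validity predicate on the state of `w`. -/
inductive VT {F W : Type*} [DecidableEq F] [DecidableEq W]
    (V : F → W → Multiset F → Prop) :
    (W → Multiset F) → List (Lab F W) → (W → Multiset F) → Prop
  | nil (C : W → Multiset F) : VT V C [] C
  | alloc {C C' ls} (f : F) (w : W) :
      V f w (C w) → VT V (Function.update C w (f ::ₘ C w)) ls C' →
      VT V C (Lab.alloc f w :: ls) C'
  | deal {C C' ls} (f : F) (w : W) :
      f ∈ C w → VT V (Function.update C w ((C w).erase f)) ls C' →
      VT V C (Lab.deal f w :: ls) C'

/-- Valid trace of the single-worker system at worker `w`. -/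
inductive VT1 {F W : Type*} [DecidableEq F]
    (V : F → W → Multiset F → Prop) (w : W) :
    Multiset F → List (Lab F W) → Multiset F → Prop
  | nil (σ : Multiset F) : VT1 V w σ [] σ
  | alloc {σ σ' ls} (f : F) :
      V f w σ → VT1 V w (f ::ₘ σ) ls σ' → VT1 V w σ (Lab.alloc f w :: ls) σ'
  | deal {σ σ' ls} (f : F) :
      f ∈ σ → VT1 V w (σ.erase f) ls σ' → VT1 V w σ (Lab.deal f w :: ls) σ'

theorem trace_projection {F W : Type*} [DecidableEq F] [DecidableEq W]
    (V : F → W → Multiset F → Prop)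
    (C C' : W → Multiset F) (ls : List (Lab F W)) (w : W)
    (h : VT V C ls C') :
    VT1 V w (C w) (ls.filter (fun l => decide (l.worker = w))) (C' w) := by
  induction h with
  | nil C => simp; exact VT1.nil _
  | alloc f w' hv _ ih =>
    by_cases hw : w' = w
    · subst hw
      simp only [List.filter_cons, Lab.worker, decide_true]
      exact VT1.alloc f hv (by simpa [Function.update_self, Lab.worker] using ih)
    · simp only [List.filter_cons, Lab.worker, hw, decide_false]
      simpa [Function.update_of_ne (Ne.symm hw), Lab.worker] using ih
  | deal f w' hm _ ih =>
    by_cases hw : w' = w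
    · subst hw
      simp only [List.filter_cons, Lab.worker, decide_true]
      exact VT1.deal f hm (by simpa [Function.update_self, Lab.worker] using ih)
    · simp only [List.filter_cons, Lab.worker, hw, decide_false]
      simpa [Function.update_of_ne (Ne.symm hw), Lab.worker] using ih
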